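/- Let 𝒲⁰(T;Z;H) = 𝒲(T;Z;H)·∏_{i=1}^k ∏_{a=k+1}^n (1 − Z_a/T_i) be the trigonometric weight function. For k-element subsets I, J of {1,...,n}, let σ_J ∈ S_n be the minimal-length permutation with J = {σ_J(1),...,σ_J(k)}, Z_I = (Z_{i_1},...,Z_{i_k}) for I = {i_1<...<i_k}, E(T;H) = ∏_{i=1}^k ∏_{j≠i} (1 − H·T_i/T_j), and R(Z) = ∏_{a=1}^k ∏_{b=k+1}^n (1 − Z_b/Z_a). Then 𝒲⁰(Z_I; Z_{σ_J}; H) = δ_{I,J} · E(Z_I; H) · R(Z_{σ_I}), where Z_{σ} = (Z_{σ(1)},...,Z_{σ(n)}). -/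
import Mathlib


noncomputable section

open MvPolynomial

/-- The rational-function field `ℂ(Z₁,…,Z_n,H)`. -/
abbrev ZF (n : ℕ) : Type := FractionRing (MvPolynomial (Fin n ⊕ Unit) ℂ)

def ZV (n : ℕ) (a : Fin n) : ZF n :=
  algebraMap (MvPolynomial (Fin n ⊕ Unit) ℂ) (ZF n) (X (Sum.inl a))

def HV (n : ℕ) : ZF n :=
  algebraMap (MvPolynomial (Fin n ⊕ Unit) ℂ) (ZF n) (X (Sum.inr ()))

/-- The function `U(T;Z;H)` of formula (3.1). -/
def Ufun {F : Type*} [Field F] (n k : ℕ) (T : Fin k → F) (Z : Fin n → F)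
    (H : F) : F :=
  ∏ i : Fin k,
    ((∏ a ∈ Finset.univ.filter (fun a : Fin n => a.1 < i.1),
        (1 - H * Z a / T i)) *
     (∏ b ∈ Finset.univ.filter (fun b : Fin n => i.1 < b.1 ∧ b.1 < k),
        (1 - Z b / T i)) *
     (∏ j ∈ Finset.univ.filter (fun j : Fin k => i < j),
        ((1 - H * T j / T i) / (1 - T j / T i))))

/-- The reduced trigonometric weight function `𝒲(T;Z;H) = Sym_T U(T;Z;H)`. -/
def Wtrig {F : Type*} [Field F] (n k : ℕ) (T : Fin k → F) (Z : Fin n → F)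
    (H : F) : F :=
  ∑ σ : Equiv.Perm (Fin k), Ufun n k (T ∘ σ) Z H

/-- The trigonometric weight function
`𝒲⁰(T;Z;H) = 𝒲(T;Z;H) ∏_{i≤k} ∏_{a>k} (1 − Z_a/T_i)`. -/
def W0 {F : Type*} [Field F] (n k : ℕ) (T : Fin k → F) (Z : Fin n → F)
    (H : F) : F :=
  Wtrig n k T Z H *
    ∏ i : Fin k, ∏ a ∈ Finset.univ.filter (fun a : Fin n => k ≤ a.1),
      (1 - Z a / T i)

/-- `E(T;H) = ∏_i ∏_{j≠i} (1 − H·T_i/T_j)`. -/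
def Efun {F : Type*} [Field F] (k : ℕ) (T : Fin k → F) (H : F) : F :=
  ∏ i : Fin k, ∏ j ∈ Finset.univ.filter (fun j : Fin k => j ≠ i),
    (1 - H * T i / T j)

/-- `R(Z) = ∏_{a≤k} ∏_{b>k} (1 − Z_b/Z_a)`. -/
def Rfun {F : Type*} [Field F] (n k : ℕ) (Z : Fin n → F) : F :=
  ∏ a ∈ Finset.univ.filter (fun a : Fin n => a.1 < k),
    ∏ b ∈ Finset.univ.filter (fun b : Fin n => k ≤ b.1),
      (1 - Z b / Z a)

/-- The increasing enumeration of a `k`-element subset of `{1, …, n}`. -/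
def enum {n k : ℕ} (I : Finset (Fin n)) (hI : I.card = k) : Fin k → Fin n :=
  fun a => (I.orderIsoOfFin hI a : Fin n)

/-- The minimal-length permutation `σ_J` with `{σ_J(1),…,σ_J(k)} = J`. -/
def permOfSubset {n k : ℕ} (hk : k ≤ n) (J : Finset (Fin n)) (hJ : J.card = k) :
    Equiv.Perm (Fin n) :=
  (finCongr (Nat.add_sub_cancel' hk)).symm.trans <|
    finSumFinEquiv.symm.trans <|
      (Equiv.sumCongr (J.orderIsoOfFin hJ).toEquiv
          ((Jᶜ.orderIsoOfFin (by simp [Finset.card_compl, hJ])).toEquiv.trans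
            (Equiv.subtypeEquivRight fun x => Finset.mem_compl))).trans
        (Equiv.sumCompl (· ∈ J))

/-! ### Auxiliary lemmas -/


lemma ZV_injective (n : ℕ) : Function.Injective (ZV n) := by
  intro a b h
  have h1 := IsFractionRing.injective (MvPolynomial (Fin n ⊕ Unit) ℂ) (ZF n) h
  exact Sum.inl_injective (MvPolynomial.X_injective h1)

lemma ZV_ne_zero (n : ℕ) (a : Fin n) : ZV n a ≠ 0 := by
  simp only [ZV, ne_eq,
    map_eq_zero_iff _ (IsFractionRing.injective (MvPolynomial (Fin n ⊕ Unit) ℂ) (ZF n))]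
  exact MvPolynomial.X_ne_zero _

lemma one_sub_ZV_div_eq_zero (n : ℕ) (a b : Fin n) :
    1 - ZV n a / ZV n b = 0 ↔ a = b := by
  rw [sub_eq_zero, eq_comm, div_eq_one_iff_eq (ZV_ne_zero n b)]
  exact ⟨fun h => ZV_injective n h, fun h => h ▸ rfl⟩

lemma permOfSubset_lt {n k : ℕ} (hk : k ≤ n) (J : Finset (Fin n)) (hJ : J.card = k)
    (a : Fin n) (h : a.1 < k) :
    permOfSubset hk J hJ a = J.orderIsoOfFin hJ ⟨a.1, h⟩ := by
  simp only [permOfSubset, Equiv.trans_apply]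
  have h1 : finSumFinEquiv.symm ((finCongr (Nat.add_sub_cancel' hk)).symm a)
      = Sum.inl ⟨a.1, h⟩ := by
    rw [Equiv.symm_apply_eq]
    simp [finSumFinEquiv_apply_left, Fin.ext_iff]
  rw [h1]
  rfl

lemma permOfSubset_ge {n k : ℕ} (hk : k ≤ n) (J : Finset (Fin n)) (hJ : J.card = k)
    (a : Fin n) (h : k ≤ a.1) :
    permOfSubset hk J hJ a ∉ J := by
  simp only [permOfSubset, Equiv.trans_apply]
  have h2 : a.1 - k < n - k := by omega
  have h1 : finSumFinEquiv.symm ((finCongr (Nat.add_sub_cancel' hk)).symm a)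
      = Sum.inr ⟨a.1 - k, h2⟩ := by
    rw [Equiv.symm_apply_eq]
    simp [finSumFinEquiv_apply_right, Fin.ext_iff]
    omega
  rw [h1]
  have h3 : ((Jᶜ.orderIsoOfFin (by simp [Finset.card_compl, hJ]) ⟨a.1 - k, h2⟩ : Fin n)) ∈ Jᶜ :=
    ((Jᶜ.orderIsoOfFin (by simp [Finset.card_compl, hJ])) ⟨a.1 - k, h2⟩).2
  simpa using Finset.mem_compl.mp h3

lemma enum_injective {n k : ℕ} (I : Finset (Fin n)) (hI : I.card = k) :
    Function.Injective (enum I hI) := fun a b h =>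
  (I.orderIsoOfFin hI).injective (Subtype.ext h)

lemma exists_lt_of_ne_one {k : ℕ} (σ : Equiv.Perm (Fin k)) (h : σ ≠ 1) :
    ∃ i, i < σ i := by
  by_contra hc
  push_neg at hc
  apply h
  have key : ∀ m : ℕ, ∀ i : Fin k, i.1 = m → σ i = i := by
    intro m
    induction m using Nat.strong_induction_on with
    | _ m IH =>
      intro i him
      rcases lt_or_eq_of_le (hc i) with hlt | heq
      · have h1 : σ (σ i) = σ i := IH (σ i).1 (by omega) (σ i) rfl
        exact absurd (σ.injective h1) (ne_of_lt hlt)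
      · exact heq
  exact Equiv.ext fun i => key i.1 i rfl

/-- Reindexing a product over `Fin n` restricted below `k` by one over `Fin k`. -/
lemma prod_fin_reindex {M : Type*} [CommMonoid M] {n k : ℕ} (hk : k ≤ n)
    (p : ℕ → Prop) [DecidablePred p] (hp : ∀ m, p m → m < k)
    (f : Fin n → M) (g : Fin k → M)
    (hfg : ∀ (j : Fin k), p j.1 → f ⟨j.1, lt_of_lt_of_le j.2 hk⟩ = g j) :
    ∏ a ∈ Finset.univ.filter (fun a : Fin n => p a.1), f a
      = ∏ j ∈ Finset.univ.filter (fun j : Fin k => p j.1), g j := by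
  refine Finset.prod_bij
    (t := Finset.univ.filter (fun j : Fin k => p j.1))
    (fun a ha => (⟨a.1, hp a.1 (Finset.mem_filter.mp ha).2⟩ : Fin k)) ?_ ?_ ?_ ?_
  · intro a ha
    simp only [Finset.mem_filter, Finset.mem_univ, true_and]
    exact (Finset.mem_filter.mp ha).2
  · intro a₁ _ a₂ _ hab
    have h := congrArg Fin.val hab
    exact Fin.ext h
  · intro j hj
    refine ⟨⟨j.1, lt_of_lt_of_le j.2 hk⟩, ?_, rfl⟩
    simp only [Finset.mem_filter, Finset.mem_univ, true_and]
    exact (Finset.mem_filter.mp hj).2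
  · intro a ha
    have h1 := (Finset.mem_filter.mp ha).2
    have := hfg ⟨a.1, hp a.1 h1⟩ h1
    simpa using this

/-- The term of `Wtrig` corresponding to a non-identity permutation vanishes. -/
lemma Ufun_eq_zero {F : Type*} [Field F] (n k : ℕ) (hk : k ≤ n)
    (T : Fin k → F) (Z : Fin n → F) (H : F)
    (σ : Equiv.Perm (Fin k)) (hσ : σ ≠ 1)
    (hZ : ∀ (a : Fin n) (h : a.1 < k), Z a = T ⟨a.1, h⟩)
    (hT0 : ∀ j, T j ≠ 0) :
    Ufun n k (T ∘ σ) Z H = 0 := by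
  obtain ⟨i, hi⟩ := exists_lt_of_ne_one σ hσ
  unfold Ufun
  apply Finset.prod_eq_zero (Finset.mem_univ i)
  have hmem : (⟨(σ i).1, lt_of_lt_of_le (σ i).2 hk⟩ : Fin n)
      ∈ Finset.univ.filter (fun b : Fin n => i.1 < b.1 ∧ b.1 < k) := by
    simp only [Finset.mem_filter, Finset.mem_univ, true_and]
    exact ⟨hi, (σ i).2⟩
  have hB : (∏ b ∈ Finset.univ.filter (fun b : Fin n => i.1 < b.1 ∧ b.1 < k),
      (1 - Z b / (T ∘ σ) i)) = 0 := by
    apply Finset.prod_eq_zero hmem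
    rw [hZ _ (σ i).2, Function.comp_apply, Fin.eta, div_self (hT0 (σ i)), sub_self]
  rw [hB, mul_zero, zero_mul]

/-- The identity-permutation term of `Wtrig` equals `Efun` at `T = Z|_{<k}`. -/
lemma Ufun_id_eq_Efun {F : Type*} [Field F] (n k : ℕ) (hk : k ≤ n)
    (T : Fin k → F) (Z : Fin n → F) (H : F)
    (hZ : ∀ (a : Fin n) (h : a.1 < k), Z a = T ⟨a.1, h⟩)
    (hTne : ∀ i j : Fin k, i ≠ j → 1 - T j / T i ≠ 0) :
    Ufun n k T Z H = Efun k T H := by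
  have key : Ufun n k T Z H
      = ∏ i : Fin k, ∏ j ∈ Finset.univ.filter (fun j : Fin k => j ≠ i),
          (1 - H * T j / T i) := by
    unfold Ufun
    apply Finset.prod_congr rfl
    intro i _
    have hA : (∏ a ∈ Finset.univ.filter (fun a : Fin n => a.1 < i.1),
        (1 - H * Z a / T i))
        = ∏ j ∈ Finset.univ.filter (fun j : Fin k => j < i), (1 - H * T j / T i) := by
      have := prod_fin_reindex (M := F) hk (fun m => m < i.1)
        (fun m hm => lt_trans hm i.2)
        (fun a => 1 - H * Z a / T i) (fun j => 1 - H * T j / T i)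
        (fun j hj => by beta_reduce; rw [hZ _ (lt_trans hj i.2)])
      rw [this]
      apply Finset.prod_congr _ (fun _ _ => rfl)
      apply Finset.filter_congr
      intro j _
      exact Iff.rfl
    have hB : (∏ b ∈ Finset.univ.filter (fun b : Fin n => i.1 < b.1 ∧ b.1 < k),
        (1 - Z b / T i))
        = ∏ j ∈ Finset.univ.filter (fun j : Fin k => i < j), (1 - T j / T i) := by
      have := prod_fin_reindex (M := F) hk (fun m => i.1 < m ∧ m < k)
        (fun m hm => hm.2)
        (fun b => 1 - Z b / T i) (fun j => 1 - T j / T i)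
        (fun j hj => by beta_reduce; rw [hZ _ hj.2])
      rw [this]
      apply Finset.prod_congr _ (fun _ _ => rfl)
      apply Finset.filter_congr
      intro j _
      exact ⟨And.left, fun h => ⟨h, j.2⟩⟩
    rw [hA, hB, mul_assoc, ← Finset.prod_mul_distrib]
    have hBC : ∀ j ∈ Finset.univ.filter (fun j : Fin k => i < j),
        (1 - T j / T i) * ((1 - H * T j / T i) / (1 - T j / T i))
          = 1 - H * T j / T i := by
      intro j hj
      have hij : i ≠ j := ne_of_lt (Finset.mem_filter.mp hj).2
      rw [mul_comm, div_mul_cancel₀ _ (hTne i j hij)]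
    rw [Finset.prod_congr rfl hBC, ← Finset.prod_union]
    · apply Finset.prod_congr _ (fun _ _ => rfl)
      rw [← Finset.filter_or]
      apply Finset.filter_congr
      intro j _
      constructor
      · rintro (h | h)
        · exact ne_of_lt h
        · exact ne_of_gt h
      · intro h
        exact lt_or_gt_of_ne h
    · rw [Finset.disjoint_left]
      intro j hj1 hj2
      have h1 := (Finset.mem_filter.mp hj1).2
      have h2 := (Finset.mem_filter.mp hj2).2
      exact absurd h1 (not_lt.mpr (le_of_lt h2))
  rw [key]
  unfold Efun
  exact Finset.prod_comm' (by intro x y; simp [ne_comm])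

/-- Lemma 3.3 for `𝒲⁰`:
`𝒲⁰(Z_I; Z_{σ_J}; H) = δ_{I,J} · E(Z_I;H) · R(Z_{σ_I})`. -/
theorem trig_weight_function_evaluation (n k : ℕ) (hk : k ≤ n)
    (I J : Finset (Fin n)) (hI : I.card = k) (hJ : J.card = k) :
    W0 n k (fun a => ZV n (enum I hI a)) (ZV n ∘ permOfSubset hk J hJ) (HV n)
      = (if I = J then 1 else 0) *
          Efun k (fun a => ZV n (enum I hI a)) (HV n) *
          Rfun n k (ZV n ∘ permOfSubset hk I hI) := by
  by_cases hIJ : I = J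
  · subst hIJ
    rw [if_pos rfl, one_mul]
    set T : Fin k → ZF n := fun a => ZV n (enum I hI a) with hT
    set Z' : Fin n → ZF n := ZV n ∘ permOfSubset hk I hI with hZ'
    have hZ : ∀ (a : Fin n) (h : a.1 < k), Z' a = T ⟨a.1, h⟩ := by
      intro a h
      simp only [hZ', Function.comp_apply]
      rw [permOfSubset_lt hk I hI a h]
      rfl
    have hTne : ∀ i j : Fin k, i ≠ j → 1 - T j / T i ≠ 0 := by
      intro i j hij h
      rw [hT, one_sub_ZV_div_eq_zero] at h
      exact hij (enum_injective I hI h).symm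
    unfold W0 Wtrig
    rw [Finset.sum_eq_single 1]
    · have h1 : T ∘ ⇑(1 : Equiv.Perm (Fin k)) = T := rfl
      rw [h1, Ufun_id_eq_Efun n k hk T Z' (HV n) hZ hTne]
      congr 1
      unfold Rfun
      symm
      have := prod_fin_reindex (M := ZF n) hk (fun m => m < k) (fun _ h => h)
        (fun a => ∏ b ∈ Finset.univ.filter (fun b : Fin n => k ≤ b.1), (1 - Z' b / Z' a))
        (fun i => ∏ b ∈ Finset.univ.filter (fun b : Fin n => k ≤ b.1), (1 - Z' b / T i))
        (fun j hj => by beta_reduce; rw [hZ _ hj])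
      rw [this]
      apply Finset.prod_congr _ (fun _ _ => rfl)
      apply Finset.filter_true_of_mem
      intro j _
      exact j.2
    · intro σ _ hσ
      exact Ufun_eq_zero n k hk T Z' (HV n) σ hσ hZ (fun j => ZV_ne_zero n _)
    · intro h
      exact absurd (Finset.mem_univ _) h
  · rw [if_neg hIJ, zero_mul, zero_mul]
    have hns : ¬ I ⊆ J := fun h =>
      hIJ (Finset.eq_of_subset_of_card_le h (le_of_eq (hJ.trans hI.symm)))
    obtain ⟨t, htI, htJ⟩ := Finset.not_subset.mp hns
    unfold W0
    apply mul_eq_zero_of_right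
    set i0 : Fin k := (I.orderIsoOfFin hI).symm ⟨t, htI⟩ with hi0
    have henum : enum I hI i0 = t := by
      simp [enum, hi0]
    set a0 : Fin n := (permOfSubset hk J hJ).symm t with ha0
    have hσa0 : permOfSubset hk J hJ a0 = t := Equiv.apply_symm_apply _ _
    have hka0 : k ≤ a0.1 := by
      by_contra h
      push_neg at h
      have := permOfSubset_lt hk J hJ a0 h
      rw [hσa0] at this
      exact htJ (this ▸ (J.orderIsoOfFin hJ ⟨a0.1, h⟩).2)
    apply Finset.prod_eq_zero (Finset.mem_univ i0)
    have hmem : a0 ∈ Finset.univ.filter (fun a : Fin n => k ≤ a.1) := by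
      simp [hka0]
    apply Finset.prod_eq_zero hmem
    show 1 - (ZV n ∘ ⇑(permOfSubset hk J hJ)) a0 / ZV n (enum I hI i0) = 0
    rw [henum, Function.comp_apply, hσa0]
    exact (one_sub_ZV_div_eq_zero n t t).mpr rfl


end
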